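/- Let (G,d) be a metric space and (𝔛,d_𝔛) a metric space of Markov type p with constant M, for some p ∈ [1,∞). Let f : G → 𝔛 be a 1-Lipschitz map. Let X ⊆ G be a finite subset, K a Markov transition kernel on X reversible with respect to a probability measure π on X, and let (Z_t)_{t≥0} be the stationary Markov chain on X with transition kernel K and Z_0 distributed according to π. Then for every t ∈ ℕ with E[d(Z_t,Z_0)^p] > 0, ρ_f( ( (1/2) E[d(Z_t,Z_0)^p] )^{1/p} ) ≤ ( 2 M^p t · diam_d(X)^p · E[d_𝔛(f(Z_1),f(Z_0))^p] / E[d(Z_t,Z_0)^p] )^{1/p}. -/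

import Mathlib

open scoped BigOperators

noncomputable section

/-- The compression function of a map between metric spaces. -/
def compressionFn {G : Type*} [PseudoMetricSpace G] {𝔛 : Type*} [PseudoMetricSpace 𝔛]
    (f : G → 𝔛) (t : ℝ) : ℝ :=
  sInf {r : ℝ | ∃ x y : G, t ≤ dist x y ∧ r = dist (f x) (f y)}

open Classical in
/-- `t`-step transition probabilities of the kernel `K`. -/
def kernelPow {X : Type*} [Fintype X] (K : X → X → ℝ) : ℕ → X → X → ℝ
  | 0 => fun u v => if u = v then 1 else 0
  | t + 1 => fun u v => ∑ w, K u w * kernelPow K t w v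

/-- `𝔛` has Markov type `p` with constant `M`: for every stationary reversible Markov
chain `(Z_t)` on a finite state space and every map `h` into `𝔛`,
`E[d(h(Z_t), h(Z_0))^p] ≤ M^p t E[d(h(Z_1), h(Z_0))^p]`. -/
def HasMarkovType (𝔛 : Type*) [PseudoMetricSpace 𝔛] (p M : ℝ) : Prop :=
  ∀ (n : ℕ) (K : Fin n → Fin n → ℝ) (π : Fin n → ℝ),
    (∀ u v, 0 ≤ K u v) → (∀ u, ∑ v, K u v = 1) →
    (∀ u, 0 ≤ π u) → (∑ u, π u = 1) →
    (∀ u v, π u * K u v = π v * K v u) →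
    ∀ (h : Fin n → 𝔛) (t : ℕ),
      ∑ u, ∑ v, π u * kernelPow K t u v * dist (h u) (h v) ^ p ≤
        M ^ p * t * ∑ u, ∑ v, π u * K u v * dist (h u) (h v) ^ p

lemma kernelPow_nonneg {X : Type*} [Fintype X] {K : X → X → ℝ}
    (hK0 : ∀ u v, 0 ≤ K u v) (t : ℕ) (u v : X) : 0 ≤ kernelPow K t u v := by
  induction t generalizing u v with
  | zero => simp only [kernelPow]; split_ifs <;> norm_num
  | succ t ih => exact Finset.sum_nonneg fun w _ => mul_nonneg (hK0 u w) (ih w v)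

lemma kernelPow_row {X : Type*} [Fintype X] {K : X → X → ℝ}
    (hK1 : ∀ u, ∑ v, K u v = 1) (t : ℕ) (u : X) : ∑ v, kernelPow K t u v = 1 := by
  induction t generalizing u with
  | zero =>
    classical
    have h : (Finset.filter (fun x => u = x) Finset.univ) = {u} := by
      ext x; simp [eq_comm]
    simp [kernelPow, h]
  | succ t ih =>
    simp only [kernelPow]
    rw [Finset.sum_comm]
    calc ∑ w, ∑ v, K u w * kernelPow K t w v
        = ∑ w, K u w * ∑ v, kernelPow K t w v := by simp [Finset.mul_sum]
      _ = ∑ w, K u w := by simp [ih]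
      _ = 1 := hK1 u

lemma kernelPow_equiv {n : ℕ} {X : Type*} [Fintype X] (e : Fin n ≃ X) (K : X → X → ℝ)
    (t : ℕ) (i j : Fin n) :
    kernelPow (fun a b => K (e a) (e b)) t i j = kernelPow K t (e i) (e j) := by
  induction t generalizing i j with
  | zero => simp only [kernelPow]; simp [e.apply_eq_iff_eq]
  | succ t ih =>
    simp only [kernelPow]
    rw [← e.sum_comp (fun w => K (e i) w * kernelPow K t w (e j))]
    exact Finset.sum_congr rfl fun w _ => by rw [ih]

set_option maxHeartbeats 1000000 in
theorem statement14
    {G : Type*} [MetricSpace G] {𝔛 : Type*} [MetricSpace 𝔛]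
    (p M : ℝ) (hp : 1 ≤ p) (hM : 0 < M) (hmt : HasMarkovType 𝔛 p M)
    (f : G → 𝔛) (hf : ∀ x y : G, dist (f x) (f y) ≤ dist x y)
    (X : Finset G) (K : X → X → ℝ) (π : X → ℝ)
    (hK0 : ∀ u v, 0 ≤ K u v) (hK1 : ∀ u, ∑ v : X, K u v = 1)
    (hπ0 : ∀ u, 0 ≤ π u) (hπ1 : ∑ u : X, π u = 1)
    (hrev : ∀ u v, π u * K u v = π v * K v u)
    (t : ℕ)
    (hpos : 0 < ∑ u : X, ∑ v : X, π u * kernelPow K t u v * dist (u : G) (v : G) ^ p) :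
    compressionFn f
        (((1 / 2) * ∑ u : X, ∑ v : X,
          π u * kernelPow K t u v * dist (u : G) (v : G) ^ p) ^ (1 / p)) ≤
      (2 * M ^ p * t * Metric.diam (X : Set G) ^ p *
        (∑ u : X, ∑ v : X, π u * K u v * dist (f (u : G)) (f (v : G)) ^ p) /
          (∑ u : X, ∑ v : X, π u * kernelPow K t u v * dist (u : G) (v : G) ^ p)) ^ (1 / p) := by
  classical
  have hp0 : (0:ℝ) < p := lt_of_lt_of_le one_pos hp
  set D := ∑ u : X, ∑ v : X, π u * kernelPow K t u v * dist (u : G) (v : G) ^ p with hD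
  set E1 := ∑ u : X, ∑ v : X, π u * K u v * dist (f (u : G)) (f (v : G)) ^ p with hE1
  have hE1nn : 0 ≤ E1 := Finset.sum_nonneg fun u _ => Finset.sum_nonneg fun v _ =>
    mul_nonneg (mul_nonneg (hπ0 u) (hK0 u v)) (Real.rpow_nonneg dist_nonneg p)
  -- diameter facts
  have hXb : Bornology.IsBounded (X : Set G) := X.finite_toSet.isBounded
  have hdle : ∀ u v : X, dist (u : G) (v : G) ≤ Metric.diam (X : Set G) :=
    fun u v => Metric.dist_le_diam_of_mem hXb u.2 v.2
  have hdiam_pos : 0 < Metric.diam (X : Set G) := by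
    by_contra h
    push_neg at h
    have hd0 : Metric.diam (X : Set G) = 0 := le_antisymm h Metric.diam_nonneg
    have : D = 0 := by
      rw [hD]
      refine Finset.sum_eq_zero fun u _ => Finset.sum_eq_zero fun v _ => ?_
      have : dist (u : G) (v : G) = 0 :=
        le_antisymm (by rw [← hd0]; exact hdle u v) dist_nonneg
      rw [this, Real.zero_rpow hp0.ne', mul_zero]
    rw [this] at hpos
    exact lt_irrefl 0 hpos
  have hdiamp : 0 < Metric.diam (X : Set G) ^ p := Real.rpow_pos_of_pos hdiam_pos p
  -- Markov type transferred to X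
  have key : ∑ u : X, ∑ v : X, π u * kernelPow K t u v * dist (f (u : G)) (f (v : G)) ^ p ≤
      M ^ p * t * E1 := by
    set e := (Fintype.equivFin ↥X).symm with he
    have trans2 : ∀ g : X → X → ℝ,
        (∑ i, ∑ j, g (e i) (e j)) = ∑ u, ∑ v, g u v := by
      intro g
      calc ∑ i, ∑ j, g (e i) (e j) = ∑ i, ∑ v, g (e i) v :=
            Finset.sum_congr rfl fun i _ => e.sum_comp _
        _ = ∑ u, ∑ v, g u v := e.sum_comp (fun u => ∑ v, g u v)
    have h0 := hmt (Fintype.card ↥X) (fun i j => K (e i) (e j)) (fun i => π (e i))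
      (fun i j => hK0 _ _)
      (fun i => (e.sum_comp (fun v => K (e i) v)).trans (hK1 (e i)))
      (fun i => hπ0 _)
      ((e.sum_comp π).trans hπ1)
      (fun i j => hrev _ _)
      (fun i => f ((e i : X) : G)) t
    have hL : ∑ i, ∑ j, (fun i => π (e i)) i *
          kernelPow (fun i j => K (e i) (e j)) t i j *
          dist (f ((e i : X) : G)) (f ((e j : X) : G)) ^ p =
        ∑ u : X, ∑ v : X, π u * kernelPow K t u v * dist (f (u : G)) (f (v : G)) ^ p := by
      rw [← trans2 (fun u v => π u * kernelPow K t u v * dist (f (u : G)) (f (v : G)) ^ p)]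
      exact Finset.sum_congr rfl fun i _ => Finset.sum_congr rfl fun j _ => by
        rw [kernelPow_equiv]
    have hR : ∑ i, ∑ j, (fun i => π (e i)) i * K (e i) (e j) *
          dist (f ((e i : X) : G)) (f ((e j : X) : G)) ^ p = E1 := by
      rw [hE1, ← trans2 (fun u v => π u * K u v * dist (f (u : G)) (f (v : G)) ^ p)]
    rw [hL, hR] at h0
    exact h0
  -- pair-sum setup
  set w : X × X → ℝ := fun q => π q.1 * kernelPow K t q.1 q.2 with hw
  have hw0 : ∀ q : X × X, 0 ≤ w q := fun q =>
    mul_nonneg (hπ0 q.1) (kernelPow_nonneg hK0 t q.1 q.2)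
  set dp : X × X → ℝ := fun q => dist (q.1 : G) (q.2 : G) ^ p with hdp
  set df : X × X → ℝ := fun q => dist (f (q.1 : G)) (f (q.2 : G)) ^ p with hdf
  have hdp0 : ∀ q, 0 ≤ dp q := fun q => Real.rpow_nonneg dist_nonneg p
  have hdf0 : ∀ q, 0 ≤ df q := fun q => Real.rpow_nonneg dist_nonneg p
  have hDq : D = ∑ q : X × X, w q * dp q := by
    rw [hD, Fintype.sum_prod_type]
  have hwsum : ∑ q : X × X, w q = 1 := by
    rw [Fintype.sum_prod_type]
    calc ∑ u : X, ∑ v : X, w (u, v) = ∑ u : X, π u * ∑ v, kernelPow K t u v := by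
          simp [hw, Finset.mul_sum]
      _ = ∑ u : X, π u := by
          refine Finset.sum_congr rfl fun u _ => ?_
          rw [kernelPow_row hK1, mul_one]
      _ = 1 := hπ1
  have keyq : ∑ q : X × X, w q * df q ≤ M ^ p * t * E1 := by
    rw [Fintype.sum_prod_type]
    exact key
  set C := 2 * M ^ p * (t : ℝ) * Metric.diam (X : Set G) ^ p * E1 / D with hC
  have hCnn : 0 ≤ C := by
    apply div_nonneg _ hpos.le
    have hMp : 0 ≤ M ^ p := Real.rpow_nonneg hM.le p
    positivity
  -- existence of a good pair
  have hex : ∃ u v : X, D / 2 ≤ dist (u : G) (v : G) ^ p ∧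
      dist (f (u : G)) (f (v : G)) ^ p ≤ C := by
    by_contra hcon
    push_neg at hcon
    set S : Finset (X × X) := Finset.univ.filter (fun q => D / 2 ≤ dp q) with hS
    have hScompl : ∑ q ∈ Sᶜ, w q * dp q ≤ D / 2 := by
      calc ∑ q ∈ Sᶜ, w q * dp q ≤ ∑ q ∈ Sᶜ, w q * (D / 2) := by
            refine Finset.sum_le_sum fun q hq => ?_
            have : ¬ (D / 2 ≤ dp q) := by
              simpa [hS] using (Finset.mem_compl.mp hq)
            exact mul_le_mul_of_nonneg_left (le_of_not_ge this) (hw0 q)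
        _ = (∑ q ∈ Sᶜ, w q) * (D / 2) := (Finset.sum_mul _ _ _).symm
        _ ≤ 1 * (D / 2) := by
            refine mul_le_mul_of_nonneg_right ?_ (by linarith [hpos])
            rw [← hwsum]
            exact Finset.sum_le_sum_of_subset_of_nonneg (Finset.subset_univ _)
              (fun q _ _ => hw0 q)
        _ = D / 2 := one_mul _
    have hSge : D / 2 ≤ ∑ q ∈ S, w q * dp q := by
      have hsplit : ∑ q ∈ S, w q * dp q + ∑ q ∈ Sᶜ, w q * dp q = D := by
        rw [Finset.sum_add_sum_compl, ← hDq]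
      linarith
    set μ := ∑ q ∈ S, w q with hμdef
    have hSle : ∑ q ∈ S, w q * dp q ≤ Metric.diam (X : Set G) ^ p * μ := by
      calc ∑ q ∈ S, w q * dp q ≤ ∑ q ∈ S, w q * Metric.diam (X : Set G) ^ p := by
            refine Finset.sum_le_sum fun q _ => ?_
            exact mul_le_mul_of_nonneg_left
              (Real.rpow_le_rpow dist_nonneg (hdle q.1 q.2) hp0.le) (hw0 q)
        _ = Metric.diam (X : Set G) ^ p * μ := by rw [← Finset.sum_mul, mul_comm]
    have hμlb : D / (2 * Metric.diam (X : Set G) ^ p) ≤ μ := by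
      rw [div_le_iff₀ (by positivity)]
      nlinarith
    have hμpos : 0 < μ := lt_of_lt_of_le (by positivity) hμlb
    obtain ⟨q₀, hq₀S, hq₀⟩ := Finset.exists_lt_of_sum_lt
      (show ∑ q ∈ S, (0:ℝ) < ∑ q ∈ S, w q by simpa using hμpos)
    have hstrict : C * μ < ∑ q ∈ S, w q * df q := by
      have : C * μ = ∑ q ∈ S, w q * C := by rw [← Finset.sum_mul, mul_comm]
      rw [this]
      refine Finset.sum_lt_sum (fun q hq => ?_) ⟨q₀, hq₀S, ?_⟩
      · have hqd : D / 2 ≤ dp q := (Finset.mem_filter.mp hq).2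
        exact mul_le_mul_of_nonneg_left (hcon q.1 q.2 hqd).le (hw0 q)
      · have hqd : D / 2 ≤ dp q₀ := (Finset.mem_filter.mp hq₀S).2
        exact mul_lt_mul_of_pos_left (hcon q₀.1 q₀.2 hqd) hq₀
    have hupper : ∑ q ∈ S, w q * df q ≤ M ^ p * t * E1 := by
      refine le_trans ?_ keyq
      exact Finset.sum_le_sum_of_subset_of_nonneg (Finset.subset_univ _)
        (fun q _ _ => mul_nonneg (hw0 q) (hdf0 q))
    have hlower : M ^ p * t * E1 ≤ C * μ := by
      have h1 : C * (D / (2 * Metric.diam (X : Set G) ^ p)) ≤ C * μ :=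
        mul_le_mul_of_nonneg_left hμlb hCnn
      have h2 : C * (D / (2 * Metric.diam (X : Set G) ^ p)) = M ^ p * t * E1 := by
        rw [hC]
        field_simp
      linarith
    linarith
  obtain ⟨u, v, hd, hdfuv⟩ := hex
  have hcancel : ∀ x : ℝ, 0 ≤ x → (x ^ p) ^ (1 / p) = x := by
    intro x hx
    rw [← Real.rpow_mul hx, mul_one_div, div_self hp0.ne', Real.rpow_one]
  have h1 : ((1 / 2) * D) ^ (1 / p) ≤ dist (u : G) (v : G) := by
    have he : (1:ℝ) / 2 * D = D / 2 := by ring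
    rw [he, ← hcancel (dist (u : G) (v : G)) dist_nonneg]
    exact Real.rpow_le_rpow (by linarith) hd (by positivity)
  have h2 : dist (f (u : G)) (f (v : G)) ≤ C ^ (1 / p) := by
    rw [← hcancel (dist (f (u : G)) (f (v : G))) dist_nonneg]
    exact Real.rpow_le_rpow (Real.rpow_nonneg dist_nonneg p) hdfuv (by positivity)
  have hbdd : BddBelow {r : ℝ | ∃ x y : G,
      ((1 / 2) * D) ^ (1 / p) ≤ dist x y ∧ r = dist (f x) (f y)} :=
    ⟨0, fun r ⟨_, _, _, hr⟩ => hr ▸ dist_nonneg⟩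
  have hmem : dist (f (u : G)) (f (v : G)) ∈ {r : ℝ | ∃ x y : G,
      ((1 / 2) * D) ^ (1 / p) ≤ dist x y ∧ r = dist (f x) (f y)} := ⟨u, v, h1, rfl⟩
  exact le_trans (csInf_le hbdd hmem) h2

end
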